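/- arXiv:1710.06378 — 2 statements merged into one kernel-verified Lean document; each statement's English description precedes it below -/
import Mathlib

section
/- Let s ∈ (0,1], δ ∈ (0,1), ρ > -log(2/(1+δ) - 1)/log(1+δ), and λ* ∈ (0,1/2) satisfy -λ* log λ* - (1-λ*) log(1-λ*) = s·log(1+δ). Then for every λ < λ*, the sum Σ_{w=1}^{⌊λn⌋} C(n,w) · (1/2 + (1/2)(1 - 2ρ·log(sn)/(sn))^w)^{sn} tends to 0 as n → ∞. -/
open Filter Real

noncomputable def auxH (x : ℝ) : ℝ := -x * Real.log x - (1 - x) * Real.log (1 - x)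

lemma auxH_eq_binEntropy (x : ℝ) : auxH x = Real.binEntropy x := by
  simp [auxH, Real.binEntropy, Real.log_inv]; ring

lemma auxH_continuous : Continuous auxH := by
  have hfe : auxH = Real.binEntropy := funext auxH_eq_binEntropy
  rw [hfe]; exact Real.binEntropy_continuous

lemma aux_exp_quarter : (0.778 : ℝ) ≤ Real.exp (-(1/4)) := by
  have h4 : Real.exp (-(1/4)) ^ (4:ℕ) = Real.exp (-1) := by
    rw [← Real.exp_nat_mul]; norm_num
  have he : Real.exp (-1) ≥ 0.3678 := by
    rw [Real.exp_neg]
    rw [ge_iff_le, le_inv_comm₀ (by norm_num) (Real.exp_pos 1)]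
    calc Real.exp 1 ≤ 2.7182818286 := Real.exp_one_lt_d9.le
      _ ≤ (0.3678:ℝ)⁻¹ := by norm_num
  by_contra hlt
  push_neg at hlt
  have h0 : (0:ℝ) ≤ Real.exp (-(1/4)) := (Real.exp_pos _).le
  have := pow_le_pow_left₀ h0 hlt.le 4
  rw [h4] at this
  norm_num at this
  linarith

lemma aux_exp_ineq {x : ℝ} (hx : 0 ≤ x) :
    1/2 + Real.exp (-x)/2 ≤ Real.exp (-(min x 1)/4) := by
  rcases le_or_gt x 1 with hx1 | hx1
  · rw [min_eq_left hx1]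
    set u := Real.exp (-x/4) with hu
    have hu4 : u ^ (4:ℕ) = Real.exp (-x) := by
      rw [hu, ← Real.exp_nat_mul]; ring_nf
    have hu1 : u ≤ 1 := by
      rw [hu]; exact Real.exp_le_one_iff.2 (by linarith)
    have hu0 : (0.778:ℝ) ≤ u := by
      refine le_trans aux_exp_quarter ?_
      rw [hu]; exact Real.exp_le_exp.2 (by linarith)
    rw [← hu4]
    have hfac : 0 ≤ (1 - u) * (u^3 + u^2 + u - 1) := by
      apply mul_nonneg (by linarith)
      nlinarith
    nlinarith
  · rw [min_eq_right hx1.le]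
    have h1 : Real.exp (-x) ≤ Real.exp (-1) := Real.exp_le_exp.2 (by linarith)
    have h2 : Real.exp (-1) ≤ 0.368 := by
      rw [Real.exp_neg, inv_le_comm₀ (Real.exp_pos 1) (by norm_num)]
      calc (0.368:ℝ)⁻¹ ≤ 2.7182818283 := by norm_num
        _ ≤ Real.exp 1 := Real.exp_one_gt_d9.le
    linarith [aux_exp_quarter]

lemma aux_geom_sum {r : ℝ} (h0 : 0 ≤ r) (h1 : r < 1) (W : ℕ) :
    ∑ w ∈ Finset.Icc 1 W, r ^ w ≤ r * (1 - r)⁻¹ := by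
  have hsum : ∑ w ∈ Finset.Icc 1 W, r ^ w = r * ∑ i ∈ Finset.range W, r ^ i := by
    calc ∑ w ∈ Finset.Icc 1 W, r ^ w = ∑ i ∈ Finset.range (W + 1 - 1), r ^ (1 + i) := by
          rw [← Finset.Ico_add_one_right_eq_Icc, Finset.sum_Ico_eq_sum_range]
      _ = r * ∑ i ∈ Finset.range W, r ^ i := by
          rw [Nat.add_sub_cancel, Finset.mul_sum]
          exact Finset.sum_congr rfl fun i _ => by rw [pow_add, pow_one]
  rw [hsum]
  apply mul_le_mul_of_nonneg_left _ h0
  calc ∑ i ∈ Finset.range W, r ^ i ≤ ∑' i : ℕ, r ^ i :=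
        Summable.sum_le_tsum _ (fun i _ => pow_nonneg h0 i) (summable_geometric_of_lt_one h0 h1)
    _ = (1 - r)⁻¹ := tsum_geometric_of_lt_one h0 h1

lemma aux_choose_le {n w : ℕ} {μ : ℝ} (hμ0 : 0 < μ) (hμ2 : μ ≤ 1/2) (hw : (w:ℝ) ≤ μ * n) :
    (n.choose w : ℝ) ≤ Real.exp (n * auxH μ) := by
  have h1μ : 0 < 1 - μ := by linarith
  have hwn : w ≤ n := by
    have : (w:ℝ) ≤ n := le_trans hw (by nlinarith [Nat.cast_nonneg (α := ℝ) n])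
    exact_mod_cast this
  have hsum_eq : ∑ k ∈ Finset.range (n+1), μ ^ k * (1-μ) ^ (n-k) * (n.choose k : ℝ) = 1 := by
    rw [← add_pow]
    have : μ + (1 - μ) = 1 := by ring
    rw [this, one_pow]
  have key : μ ^ w * (1-μ) ^ (n-w) * (n.choose w : ℝ) ≤ 1 := by
    calc μ ^ w * (1-μ) ^ (n-w) * (n.choose w : ℝ)
        ≤ ∑ k ∈ Finset.range (n+1), μ ^ k * (1-μ) ^ (n-k) * (n.choose k : ℝ) :=
          Finset.single_le_sum (f := fun k => μ ^ k * (1-μ) ^ (n-k) * (n.choose k : ℝ))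
            (fun k _ => by positivity) (Finset.mem_range.2 (Nat.lt_succ_of_le hwn))
      _ = 1 := hsum_eq
  have hp : 0 < μ ^ w * (1 - μ) ^ (n - w) := by positivity
  have hle : (n.choose w : ℝ) ≤ (μ ^ w * (1 - μ) ^ (n - w))⁻¹ := by
    rw [← one_div, le_div_iff₀ hp]
    calc (n.choose w : ℝ) * (μ ^ w * (1 - μ) ^ (n - w))
        = μ ^ w * (1-μ) ^ (n-w) * (n.choose w : ℝ) := by ring
      _ ≤ 1 := key
  refine hle.trans ?_
  have heq : (μ ^ w * (1 - μ) ^ (n - w))⁻¹ =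
      Real.exp (-((w : ℝ) * Real.log μ + ((n - w : ℕ) : ℝ) * Real.log (1 - μ))) := by
    rw [← Real.log_pow, ← Real.log_pow, ← Real.log_mul (by positivity) (by positivity),
      ← Real.log_inv, Real.exp_log (by positivity)]
  rw [heq, Real.exp_le_exp]
  have hcast : ((n - w : ℕ) : ℝ) = (n : ℝ) - w := Nat.cast_sub hwn
  rw [hcast, auxH]
  have hab : Real.log μ ≤ Real.log (1 - μ) := Real.log_le_log hμ0 (by linarith)
  nlinarith [hw, hab]

set_option maxHeartbeats 2000000 in
/-- Key summation lemma: for `s ∈ (0,1]`, `δ ∈ (0,1)`,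
`ρ > -log(2/(1+δ)-1)/log(1+δ)`, and `λ* ∈ (0,1/2)` with
`H(λ*) = s·log(1+δ)`, for every `λ < λ*` the sum
`Σ_{w=1}^{⌊λn⌋} C(n,w)·(1/2 + (1/2)(1 - 2ρ·log(sn)/(sn))^w)^{sn}` tends to `0`. -/
theorem key_sum_tendsto_zero (s δ ρ lamStar lam : ℝ)
    (hs : s ∈ Set.Ioc (0:ℝ) 1) (hδ : δ ∈ Set.Ioo (0:ℝ) 1)
    (hρ : -Real.log (2/(1+δ) - 1) / Real.log (1+δ) < ρ)
    (hstar : lamStar ∈ Set.Ioo (0:ℝ) (1/2))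
    (hH : -lamStar * Real.log lamStar - (1 - lamStar) * Real.log (1 - lamStar)
      = s * Real.log (1 + δ))
    (hlam : lam < lamStar) :
    Tendsto (fun n : ℕ =>
      ∑ w ∈ Finset.Icc 1 ⌊lam * (n:ℝ)⌋₊,
        (n.choose w : ℝ) *
          (1/2 + 1/2 * (1 - 2 * (ρ * Real.log (s * n) / (s * n))) ^ w) ^ (s * (n:ℝ)))
      atTop (nhds 0) := by
  obtain ⟨hs0, hs1⟩ := hs
  obtain ⟨hδ0, hδ1⟩ := hδ
  obtain ⟨hls0, hls2⟩ := hstar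
  -- trivial case lam ≤ 0
  rcases le_or_gt lam 0 with hlam0 | hlam0
  · have hfloor : ∀ n : ℕ, ⌊lam * (n:ℝ)⌋₊ = 0 := fun n =>
      Nat.floor_of_nonpos (mul_nonpos_of_nonpos_of_nonneg hlam0 (Nat.cast_nonneg n))
    have : (fun n : ℕ =>
        ∑ w ∈ Finset.Icc 1 ⌊lam * (n:ℝ)⌋₊,
          (n.choose w : ℝ) *
            (1/2 + 1/2 * (1 - 2 * (ρ * Real.log (s * n) / (s * n))) ^ w) ^ (s * (n:ℝ)))
        = fun _ : ℕ => (0:ℝ) := by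
      funext n
      rw [hfloor n]
      simp
    rw [this]
    exact tendsto_const_nhds
  -- ρ > 2
  have hlog1δ : 0 < Real.log (1+δ) := Real.log_pos (by linarith)
  have hρ2 : 2 < ρ := by
    refine lt_of_le_of_lt ?_ hρ
    rw [le_div_iff₀ hlog1δ]
    have h1δ : (1:ℝ) + δ ≠ 0 := by linarith
    have hfrac : 2/(1+δ) - 1 = (1-δ)/(1+δ) := by field_simp; ring
    rw [hfrac, Real.log_div (by linarith) (by linarith)]
    have hδδ : Real.log ((1+δ)*(1-δ)) ≤ 0 :=
      Real.log_nonpos (by nlinarith) (by nlinarith)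
    rw [Real.log_mul (by linarith) (by linarith)] at hδδ
    linarith
  have hρ0 : 0 < ρ := by linarith
  -- entropy bounds
  have hlam2 : lam < 1/2 := lt_trans hlam hls2
  have hHmono : auxH lam < auxH lamStar := by
    have h1 : auxH lam = Real.binEntropy lam := by
      simp [auxH, Real.binEntropy, Real.log_inv]; ring
    have h2 : auxH lamStar = Real.binEntropy lamStar := by
      simp [auxH, Real.binEntropy, Real.log_inv]; ring
    rw [h1, h2]
    exact Real.binEntropy_strictMonoOn ⟨hlam0.le, by norm_num; linarith⟩
      ⟨hls0.le, by norm_num; linarith⟩ hlam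
  have hHstar : auxH lamStar = s * Real.log (1 + δ) := by unfold auxH; linarith [hH]
  have hHlam2 : auxH lam < s * Real.log 2 := by
    have hlt : Real.log (1+δ) < Real.log 2 := Real.log_lt_log (by linarith) (by linarith)
    nlinarith
  -- constants
  set c := (s * Real.log 2 - auxH lam) / 2 with hc_def
  have hc : 0 < c := by rw [hc_def]; linarith
  set L := c / s with hL_def
  have hL : 0 < L := div_pos hc hs0
  set β := Real.exp L - 1 with hβ_def
  have hβ : 0 < β := by
    have := Real.add_one_le_exp L
    rw [hβ_def]; linarith
  set T := max 1 (Real.log β⁻¹ + 1) with hT_def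
  have hT1 : (1:ℝ) ≤ T := le_max_left _ _
  have hT0 : (0:ℝ) < T := lt_of_lt_of_le one_pos hT1
  have hTβ : Real.exp (-T) ≤ β := by
    have h1 : Real.log β⁻¹ + 1 ≤ T := le_max_right _ _
    rw [Real.log_inv] at h1
    calc Real.exp (-T) ≤ Real.exp (Real.log β) := Real.exp_le_exp.2 (by linarith)
      _ = β := Real.exp_log hβ
  have hcL : s * (Real.log 2 - L) = auxH lam + c := by
    have hsL : s * L = c := by rw [hL_def]; field_simp
    rw [mul_sub, hsL, hc_def]; ring
  -- limit machinery
  have hsn : Tendsto (fun n:ℕ => s*(n:ℝ)) atTop atTop :=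
    (tendsto_natCast_atTop_atTop (R := ℝ)).const_mul_atTop hs0
  have hlogsn : Tendsto (fun n:ℕ => Real.log (s*(n:ℝ))) atTop atTop :=
    Real.tendsto_log_atTop.comp hsn
  have hrt : Tendsto (fun n:ℕ => (n:ℝ) * (s*(n:ℝ)) ^ (-(ρ/2))) atTop (nhds 0) := by
    have hpow : Tendsto (fun x:ℝ => x ^ (-(ρ/2-1))) atTop (nhds 0) :=
      tendsto_rpow_neg_atTop (by linarith)
    have hcomp : Tendsto (fun n:ℕ => ((n:ℝ)) ^ (-(ρ/2-1))) atTop (nhds 0) :=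
      hpow.comp (tendsto_natCast_atTop_atTop (R := ℝ))
    have hlim : Tendsto (fun n:ℕ => s ^ (-(ρ/2)) * ((n:ℝ)) ^ (-(ρ/2-1))) atTop (nhds 0) := by
      simpa using hcomp.const_mul (s ^ (-(ρ/2)))
    refine Tendsto.congr' ?_ hlim
    filter_upwards [eventually_ge_atTop 1] with n hn
    have hn0 : (0:ℝ) < n := by exact_mod_cast Nat.lt_of_lt_of_le Nat.zero_lt_one hn
    rw [Real.mul_rpow hs0.le hn0.le]
    rw [show -(ρ/2-1) = 1 + -(ρ/2) by ring, Real.rpow_add hn0, Real.rpow_one]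
    ring
  have hnexp : ∀ a : ℝ, 0 < a →
      Tendsto (fun n:ℕ => (n:ℝ) * Real.exp (-(a*(n:ℝ)))) atTop (nhds 0) := by
    intro a ha
    have h1 := tendsto_pow_mul_exp_neg_atTop_nhds_zero 1
    have h2 : Tendsto (fun n:ℕ => a*(n:ℝ)) atTop atTop :=
      (tendsto_natCast_atTop_atTop (R := ℝ)).const_mul_atTop ha
    have h3 := (h1.comp h2).const_mul a⁻¹
    rw [mul_zero] at h3
    refine h3.congr fun n => ?_
    simp only [Function.comp_apply, pow_one]
    field_simp
  have hauxHcont : Continuous auxH := by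
    have hfe : auxH = Real.binEntropy := by
      funext x; simp [auxH, Real.binEntropy, Real.log_inv]; ring
    rw [hfe]; exact Real.binEntropy_continuous
  have hg : Tendsto (fun n:ℕ =>
      (n:ℝ)*(s*(n:ℝ))^(-(ρ/2)) * (1 - (n:ℝ)*(s*(n:ℝ))^(-(ρ/2)))⁻¹
        + lam*(n:ℝ)*(Real.exp (-(s/8*(n:ℝ))) + Real.exp (-(c*(n:ℝ)))))
      atTop (nhds 0) := by
    have hinv : Tendsto (fun n:ℕ => (1 - (n:ℝ)*(s*(n:ℝ))^(-(ρ/2)))⁻¹) atTop (nhds 1) := by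
      have h := (tendsto_const_nhds.sub hrt).inv₀ (by norm_num : (1:ℝ) - 0 ≠ 0)
      simpa using h
    have part1 : Tendsto (fun n:ℕ =>
        (n:ℝ)*(s*(n:ℝ))^(-(ρ/2)) * (1 - (n:ℝ)*(s*(n:ℝ))^(-(ρ/2)))⁻¹) atTop (nhds 0) := by
      simpa using hrt.mul hinv
    have p1 := (hnexp (s/8) (by linarith)).const_mul lam
    have p2 := (hnexp c hc).const_mul lam
    have part2 : Tendsto (fun n:ℕ =>
        lam*(n:ℝ)*(Real.exp (-(s/8*(n:ℝ))) + Real.exp (-(c*(n:ℝ))))) atTop (nhds 0) := by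
      have h := p1.add p2
      rw [mul_zero, add_zero] at h
      refine h.congr fun n => ?_
      ring
    simpa using part1.add part2
  -- eventual facts
  have hdiv0 : Tendsto (fun n:ℕ => Real.log (s*(n:ℝ)) / (s*(n:ℝ))) atTop (nhds 0) :=
    Real.isLittleO_log_id_atTop.tendsto_div_nhds_zero.comp hsn
  have hevε : ∀ᶠ n:ℕ in atTop, 2*(ρ*Real.log (s*(n:ℝ))/(s*(n:ℝ))) ≤ 1/2 := by
    have h2 := hdiv0.const_mul (2*ρ)
    rw [mul_zero] at h2
    have h := h2.eventually_le_const (show (0:ℝ)<1/2 by norm_num)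
    filter_upwards [h] with n hn
    calc 2*(ρ*Real.log (s*(n:ℝ))/(s*(n:ℝ)))
        = 2*ρ*(Real.log (s*(n:ℝ))/(s*(n:ℝ))) := by ring
      _ ≤ 1/2 := hn
  have hμt : Tendsto (fun n:ℕ => T*s/(2*ρ*Real.log (s*(n:ℝ)))) atTop (nhds 0) :=
    tendsto_const_nhds.div_atTop (hlogsn.const_mul_atTop (by positivity : (0:ℝ) < 2*ρ))
  have hevμ : ∀ᶠ n:ℕ in atTop, T*s/(2*ρ*Real.log (s*(n:ℝ))) ≤ 1/2 :=
    hμt.eventually_le_const (by norm_num)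
  have hevHμ : ∀ᶠ n:ℕ in atTop, auxH (T*s/(2*ρ*Real.log (s*(n:ℝ)))) ≤ s/8 := by
    have h0 : auxH 0 = 0 := by simp [auxH]
    have ht : Tendsto (fun n:ℕ => auxH (T*s/(2*ρ*Real.log (s*(n:ℝ))))) atTop (nhds 0) := by
      have := (hauxHcont.tendsto 0).comp hμt
      rwa [h0] at this
    exact ht.eventually_le_const (by linarith)
  have hevr : ∀ᶠ n:ℕ in atTop, (n:ℝ)*(s*(n:ℝ))^(-(ρ/2)) ≤ 1/2 :=
    hrt.eventually_le_const (by norm_num)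
  have hev2 : ∀ᶠ n:ℕ in atTop, (2:ℝ) ≤ s*(n:ℝ) := hsn.eventually_ge_atTop 2
  refine squeeze_zero' ?_ ?_ hg
  · filter_upwards [hevε] with n hε
    apply Finset.sum_nonneg
    intro w hw
    have h1 : (0:ℝ) ≤ 1 - 2*(ρ*Real.log (s*(n:ℝ))/(s*(n:ℝ))) := by linarith
    refine mul_nonneg (Nat.cast_nonneg _) (Real.rpow_nonneg ?_ _)
    have := pow_nonneg h1 w
    positivity
  · filter_upwards [hev2, hevε, hevμ, hevHμ, hevr] with n h2sn hε hμhalf hHμ hr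
    set m := s * (n:ℝ) with hm_def
    set ε := 2 * (ρ * Real.log m / m) with hε_def
    have hm0 : (0:ℝ) < m := by linarith
    have hlogm : (0:ℝ) < Real.log m := Real.log_pos (by linarith)
    have hn0 : (0:ℝ) < n := by nlinarith
    have hε0 : 0 < ε := by rw [hε_def]; positivity
    have hR0 : (0:ℝ) ≤ (n:ℝ) * m ^ (-(ρ/2)) := by positivity
    have hu0 : (0:ℝ) ≤ Real.exp (-(s/8*(n:ℝ))) + Real.exp (-(c*(n:ℝ))) := by positivity
    have hμ0 : 0 < T*s/(2*ρ*Real.log m) := by positivity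
    have key : ∀ w ∈ Finset.Icc 1 ⌊lam * (n:ℝ)⌋₊,
        (n.choose w : ℝ) * (1/2 + 1/2 * (1 - ε) ^ w) ^ m
          ≤ ((n:ℝ) * m ^ (-(ρ/2)))^w
            + (Real.exp (-(s/8*(n:ℝ))) + Real.exp (-(c*(n:ℝ)))) := by
      intro w hw
      obtain ⟨hw1, hwW⟩ := Finset.mem_Icc.mp hw
      have hwlam : (w:ℝ) ≤ lam * n :=
        le_trans (Nat.cast_le.2 hwW) (Nat.floor_le (by positivity))
      have h1ε0 : (0:ℝ) ≤ 1 - ε := by linarith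
      have hbase0 : (0:ℝ) ≤ 1/2 + 1/2*(1-ε)^w := by
        have := pow_nonneg h1ε0 w; linarith
      have hxw0 : (0:ℝ) ≤ ε * w := by positivity
      have hpow_exp : (1-ε)^w ≤ Real.exp (-(ε * (w:ℝ))) := by
        have h1 : 1 - ε ≤ Real.exp (-ε) := by linarith [Real.add_one_le_exp (-ε)]
        calc (1-ε)^w ≤ Real.exp (-ε) ^ w := pow_le_pow_left₀ h1ε0 h1 w
          _ = Real.exp (-(ε*(w:ℝ))) := by rw [← Real.exp_nat_mul]; ring_nf
      have hbase_le : 1/2 + 1/2*(1-ε)^w ≤ Real.exp (-(min (ε*(w:ℝ)) 1)/4) := by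
        have h := aux_exp_ineq hxw0
        linarith
      have hrpow : (1/2 + 1/2*(1-ε)^w) ^ m ≤ Real.exp (-(min (ε*(w:ℝ)) 1)/4 * m) := by
        calc (1/2 + 1/2*(1-ε)^w) ^ m
            ≤ (Real.exp (-(min (ε*(w:ℝ)) 1)/4)) ^ m :=
              Real.rpow_le_rpow hbase0 hbase_le hm0.le
          _ = Real.exp (-(min (ε*(w:ℝ)) 1)/4 * m) := (Real.exp_mul _ m).symm
      have hch : (n.choose w:ℝ) ≤ (n:ℝ)^w := by exact_mod_cast Nat.choose_le_pow n w
      rcases le_or_gt (ε * (w:ℝ)) 1 with hsmall | hbig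
      · rw [min_eq_left hsmall] at hrpow
        have hexp_eq : -(ε*(w:ℝ))/4 * m = (w:ℝ) * (Real.log m * (-(ρ/2))) := by
          rw [hε_def]; field_simp; ring
        have hstep : (1/2 + 1/2*(1-ε)^w) ^ m ≤ (m ^ (-(ρ/2)))^w := by
          refine hrpow.trans (le_of_eq ?_)
          rw [hexp_eq, Real.rpow_def_of_pos hm0, ← Real.exp_nat_mul]
        calc (n.choose w:ℝ) * (1/2 + 1/2*(1-ε)^w) ^ m
            ≤ (n:ℝ)^w * (m ^ (-(ρ/2)))^w :=
              mul_le_mul hch hstep (Real.rpow_nonneg hbase0 m) (pow_nonneg (Nat.cast_nonneg n) w)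
          _ = ((n:ℝ) * m ^ (-(ρ/2)))^w := (mul_pow _ _ w).symm
          _ ≤ _ := le_add_of_nonneg_right hu0
      · rw [min_eq_right hbig.le] at hrpow
        rcases le_or_gt (ε * (w:ℝ)) T with hmid | hlarge
        · have hwμ : (w:ℝ) ≤ (T*s/(2*ρ*Real.log m)) * n := by
            have hεX : ε * ((T*s/(2*ρ*Real.log m)) * n) = T := by
              rw [hε_def, hm_def]; field_simp; exact mul_inv_cancel₀ (by rw [← hm_def]; exact hlogm.ne')
            have h := hmid
            rw [← hεX] at h
            exact le_of_mul_le_mul_left h hε0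
          have hchC := aux_choose_le hμ0 hμhalf hwμ
          have hch2 : (n.choose w:ℝ) ≤ Real.exp (m/8) := by
            refine hchC.trans (Real.exp_le_exp.2 ?_)
            calc (n:ℝ) * auxH (T*s/(2*ρ*Real.log m)) ≤ (n:ℝ) * (s/8) :=
                mul_le_mul_of_nonneg_left hHμ hn0.le
              _ = m/8 := by rw [hm_def]; ring
          calc (n.choose w:ℝ) * (1/2 + 1/2*(1-ε)^w) ^ m
              ≤ Real.exp (m/8) * Real.exp (-(1:ℝ)/4 * m) :=
                mul_le_mul hch2 hrpow (Real.rpow_nonneg hbase0 m) (Real.exp_pos _).le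
            _ = Real.exp (-(s/8*(n:ℝ))) := by
                rw [← Real.exp_add]; congr 1; rw [hm_def]; ring
            _ ≤ _ := by
                have h1 : (0:ℝ) ≤ ((n:ℝ) * m ^ (-(ρ/2)))^w := pow_nonneg hR0 w
                have h2 : (0:ℝ) < Real.exp (-(c*(n:ℝ))) := Real.exp_pos _
                linarith
        · have hrD : (1-ε)^w ≤ β := by
            refine hpow_exp.trans (le_trans (Real.exp_le_exp.2 ?_) hTβ)
            linarith
          have hbaseD : 1/2 + 1/2*(1-ε)^w ≤ Real.exp (L - Real.log 2) := by
            have h2 : Real.exp (L - Real.log 2) = (1+β)/2 := by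
              rw [Real.exp_sub, Real.exp_log (by norm_num : (0:ℝ) < 2), hβ_def]; ring
            rw [h2]; linarith
          have hD : (1/2 + 1/2*(1-ε)^w)^m ≤ Real.exp (-((auxH lam + c) * (n:ℝ))) := by
            calc (1/2 + 1/2*(1-ε)^w)^m
                ≤ (Real.exp (L - Real.log 2))^m := Real.rpow_le_rpow hbase0 hbaseD hm0.le
              _ = Real.exp ((L - Real.log 2)*m) := (Real.exp_mul _ m).symm
              _ = Real.exp (-((auxH lam + c) * (n:ℝ))) := by
                  congr 1
                  rw [hm_def]
                  linear_combination (-(n:ℝ)) * hcL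
          have hchD : (n.choose w:ℝ) ≤ Real.exp ((n:ℝ) * auxH lam) :=
            aux_choose_le hlam0 hlam2.le hwlam
          calc (n.choose w:ℝ) * (1/2 + 1/2*(1-ε)^w) ^ m
              ≤ Real.exp ((n:ℝ)*auxH lam) * Real.exp (-((auxH lam + c)*(n:ℝ))) :=
                mul_le_mul hchD hD (Real.rpow_nonneg hbase0 m) (Real.exp_pos _).le
            _ = Real.exp (-(c*(n:ℝ))) := by rw [← Real.exp_add]; congr 1; ring
            _ ≤ _ := by
                have h1 : (0:ℝ) ≤ ((n:ℝ) * m ^ (-(ρ/2)))^w := pow_nonneg hR0 w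
                have h2 : (0:ℝ) < Real.exp (-(s/8*(n:ℝ))) := Real.exp_pos _
                linarith
    calc ∑ w ∈ Finset.Icc 1 ⌊lam * (n:ℝ)⌋₊,
          (n.choose w : ℝ) * (1/2 + 1/2 * (1 - ε) ^ w) ^ m
        ≤ ∑ w ∈ Finset.Icc 1 ⌊lam * (n:ℝ)⌋₊,
            (((n:ℝ) * m ^ (-(ρ/2)))^w
              + (Real.exp (-(s/8*(n:ℝ))) + Real.exp (-(c*(n:ℝ))))) :=
          Finset.sum_le_sum key
      _ = (∑ w ∈ Finset.Icc 1 ⌊lam * (n:ℝ)⌋₊, ((n:ℝ) * m ^ (-(ρ/2)))^w)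
            + ((Finset.Icc 1 ⌊lam * (n:ℝ)⌋₊).card : ℝ)
              * (Real.exp (-(s/8*(n:ℝ))) + Real.exp (-(c*(n:ℝ)))) := by
          rw [Finset.sum_add_distrib, Finset.sum_const, nsmul_eq_mul]
      _ ≤ (n:ℝ) * m ^ (-(ρ/2)) * (1 - (n:ℝ) * m ^ (-(ρ/2)))⁻¹
            + lam*(n:ℝ)*(Real.exp (-(s/8*(n:ℝ))) + Real.exp (-(c*(n:ℝ)))) := by
          have hgeo := aux_geom_sum hR0 (lt_of_le_of_lt hr (by norm_num)) ⌊lam * (n:ℝ)⌋₊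
          have hcard : ((Finset.Icc 1 ⌊lam * (n:ℝ)⌋₊).card : ℝ) ≤ lam * n := by
            rw [Nat.card_Icc]
            simpa using Nat.floor_le (show (0:ℝ) ≤ lam * n by positivity)
          have h2 := mul_le_mul_of_nonneg_right hcard hu0
          linarith
end

section
/- Consider a random XOR-formula Q over n Boolean variables consisting of ⌈sn⌉ independent XOR-clauses, each clause including each variable independently with probability f(n) and a random constant bit. Let g : ℕ → ℝ be nonnegative, and suppose f(n) ≤ 1 for large n and Σ_{w=1}^{⌊g(n)⌋} C(n,w)·(1/2 + (1/2)(1-2f(n))^w)^{sn} → 0 as n → ∞. Then with probability tending to 1, every pair of distinct solutions of Q has Hamming distance greater than g(n). -/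
open MeasureTheory Filter

/-- The Bernoulli measure on `Bool` with parameter `p` (truncated to `[0,1]`). -/
noncomputable def bern (p : ℝ) : Measure Bool :=
  (PMF.bernoulli (min (Real.toNNReal p) 1) (min_le_right _ _)).toMeasure

instance (p : ℝ) : IsProbabilityMeasure (bern p) := PMF.toMeasure.isProbabilityMeasure _

/-- A random XOR-clause over `n` variables: each variable is included independently with
probability `p`, and the constant bit `1` is included with probability `1/2`. -/
noncomputable def clauseM (n : ℕ) (p : ℝ) : Measure ((Fin n → Bool) × Bool) :=
  (Measure.pi fun _ : Fin n => bern p).prod (bern (1/2))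

instance (n : ℕ) (p : ℝ) : IsProbabilityMeasure (clauseM n p) := by
  unfold clauseM; infer_instance

/-- The random XOR-formula `Q^p(n, m)`: `m` independent random XOR-clauses. -/
noncomputable def formulaM (n m : ℕ) (p : ℝ) : Measure (Fin m → (Fin n → Bool) × Bool) :=
  Measure.pi fun _ : Fin m => clauseM n p

/-- An XOR-clause `(S, b)` is satisfied by `σ` iff the number of included variables set to
true, plus the constant bit, is odd. -/
def xorSat {n : ℕ} (c : (Fin n → Bool) × Bool) (σ : Fin n → Bool) : Prop :=
  Odd ((∑ i, if c.1 i && σ i then (1 : ℕ) else 0) + (if c.2 then 1 else 0))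


open Finset

lemma sum_fun_prod {n : ℕ} (h : Fin n → Bool → ℝ) :
    ∑ S : Fin n → Bool, ∏ i, h i (S i) = ∏ i, (h i true + h i false) := by
  rw [← Fintype.piFinset_univ, ← Finset.prod_univ_sum]
  simp [Fintype.sum_bool]

lemma parity_signed {n : ℕ} (p : ℝ) (A : Finset (Fin n)) :
    ∑ S : Fin n → Bool, (∏ i, (if S i then p else 1 - p)) *
      (-1 : ℝ) ^ (∑ i ∈ A, if S i then 1 else 0) = (1 - 2*p) ^ A.card := by
  have key : ∀ S : Fin n → Bool,
      (∏ i, (if S i then p else 1 - p)) * (-1:ℝ) ^ (∑ i ∈ A, if S i then 1 else 0)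
      = ∏ i, ((if S i then p else 1 - p) * (if i ∈ A then (-1:ℝ) ^ (if S i then 1 else 0) else 1)) := by
    intro S
    rw [Finset.prod_mul_distrib]
    congr 1
    rw [← Finset.prod_pow_eq_pow_sum]
    rw [Finset.prod_ite_mem Finset.univ A (fun i => (-1:ℝ) ^ (if S i then 1 else 0))]
    simp
  simp_rw [key]
  rw [sum_fun_prod (fun i b => (if b then p else 1 - p) * (if i ∈ A then (-1:ℝ) ^ (if b then 1 else 0) else 1))]
  have : ∀ i : Fin n, ((if (true:Bool) then p else 1 - p) * (if i ∈ A then (-1:ℝ) ^ (if (true:Bool) then 1 else 0) else 1) + (if (false:Bool) then p else 1 - p) * (if i ∈ A then (-1:ℝ) ^ (if (false:Bool) then 1 else 0) else 1)) = if i ∈ A then 1 - 2*p else 1 := by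
    intro i
    by_cases hi : i ∈ A
    · simp only [if_pos hi, Bool.false_eq_true, if_true, if_false, pow_one, pow_zero]; ring
    · simp only [if_neg hi, Bool.false_eq_true, if_true, if_false, mul_one]; ring
  rw [Finset.prod_congr rfl (fun i _ => this i)]
  rw [Finset.prod_ite_mem Finset.univ A (fun _ => 1 - 2*p)]
  simp [Finset.prod_const]

lemma parity_total {n : ℕ} (p : ℝ) :
    ∑ S : Fin n → Bool, (∏ i, (if S i then p else 1 - p)) = 1 := by
  rw [sum_fun_prod (fun _ b => if b then p else 1 - p)]
  simp

lemma parity_even {n : ℕ} (p : ℝ) (A : Finset (Fin n)) :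
    ∑ S ∈ Finset.univ.filter (fun S : Fin n → Bool => Even (∑ i ∈ A, if S i then 1 else 0)),
      (∏ i, (if S i then p else 1 - p)) = 1/2 + 1/2 * (1 - 2*p) ^ A.card := by
  have h2 : ∑ S : Fin n → Bool, ((∏ i, (if S i then p else 1 - p))
      + (∏ i, (if S i then p else 1 - p)) * (-1:ℝ) ^ (∑ i ∈ A, if S i then 1 else 0))
      = 1 + (1 - 2*p) ^ A.card := by
    rw [Finset.sum_add_distrib, parity_total, parity_signed]
  have h3 : ∀ S : Fin n → Bool, (∏ i, (if S i then p else 1 - p))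
      + (∏ i, (if S i then p else 1 - p)) * (-1:ℝ) ^ (∑ i ∈ A, if S i then 1 else 0)
      = if Even (∑ i ∈ A, if S i then 1 else 0) then 2 * ∏ i, (if S i then p else 1 - p) else 0 := by
    intro S
    by_cases hE : Even (∑ i ∈ A, if S i then 1 else 0)
    · rw [if_pos hE, hE.neg_one_pow]; ring
    · rw [if_neg hE, (Nat.not_even_iff_odd.1 hE).neg_one_pow]; ring
  simp_rw [h3] at h2
  rw [Finset.sum_ite, Finset.sum_const_zero, add_zero, ← Finset.mul_sum] at h2
  linarith

open MeasureTheory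

lemma measure_finset' {α : Type*} [MeasurableSpace α] [MeasurableSingletonClass α]
    (μ : Measure α) (t : Finset α) : μ ↑t = ∑ x ∈ t, μ {x} := by
  rw [← Set.biUnion_of_singleton (↑t : Set α)]
  rw [Finset.set_biUnion_coe, measure_biUnion_finset (fun x _ y _ hxy => by simp [Set.disjoint_singleton, hxy])
    (fun x _ => measurableSet_singleton x)]

lemma bern_singleton (p : ℝ) (hp0 : 0 ≤ p) (hp1 : p ≤ 1) (b : Bool) :
    bern p {b} = ENNReal.ofReal (if b then p else 1 - p) := by
  have hmin : min (Real.toNNReal p) 1 = Real.toNNReal p :=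
    min_eq_left (Real.toNNReal_le_one.2 hp1)
  rw [bern, PMF.toMeasure_apply_singleton _ _ (measurableSet_singleton b)]
  rw [PMF.bernoulli_apply, hmin]
  cases b
  · simp only [cond_false, if_false, Bool.false_eq_true]
    show (1:ENNReal) - ENNReal.ofReal p = ENNReal.ofReal (1 - p)
    rw [← ENNReal.ofReal_one, ENNReal.ofReal_sub _ hp0]
  · simp [ENNReal.ofReal]

lemma pi_parity (n : ℕ) (p : ℝ) (hp0 : 0 ≤ p) (hp1 : p ≤ 1) (A : Finset (Fin n)) :
    (Measure.pi fun _ : Fin n => bern p) {S : Fin n → Bool | Even (∑ i ∈ A, if S i then 1 else 0)}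
      = ENNReal.ofReal (1/2 + 1/2 * (1 - 2 * p) ^ A.card) := by
  classical
  have hset : {S : Fin n → Bool | Even (∑ i ∈ A, if S i then 1 else 0)}
      = ↑(Finset.univ.filter (fun S : Fin n → Bool => Even (∑ i ∈ A, if S i then 1 else 0))) := by
    ext S; simp
  rw [hset, measure_finset']
  have hsing : ∀ S : Fin n → Bool, (Measure.pi fun _ : Fin n => bern p) {S}
      = ENNReal.ofReal (∏ i, if S i then p else 1 - p) := by
    intro S
    rw [← Set.univ_pi_singleton S, Measure.pi_pi]
    rw [ENNReal.ofReal_prod_of_nonneg]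
    · exact Finset.prod_congr rfl fun i _ => bern_singleton p hp0 hp1 (S i)
    · intro i _; split <;> [exact hp0; linarith]
  rw [Finset.sum_congr rfl fun S _ => hsing S]
  rw [← ENNReal.ofReal_sum_of_nonneg]
  · rw [parity_even]
  · intro S _
    exact Finset.prod_nonneg fun i _ => by split <;> [exact hp0; linarith]

lemma clause_even (n : ℕ) (p : ℝ) (hp0 : 0 ≤ p) (hp1 : p ≤ 1) (A : Finset (Fin n)) :
    clauseM n p {c : (Fin n → Bool) × Bool | Even (∑ i ∈ A, if c.1 i then 1 else 0)}
      = ENNReal.ofReal (1/2 + 1/2 * (1 - 2 * p) ^ A.card) := by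
  have hset : {c : (Fin n → Bool) × Bool | Even (∑ i ∈ A, if c.1 i then 1 else 0)}
      = {S : Fin n → Bool | Even (∑ i ∈ A, if S i then 1 else 0)} ×ˢ (Set.univ : Set Bool) := by
    ext c; simp
  rw [clauseM, hset, Measure.prod_prod, measure_univ, mul_one, pi_parity n p hp0 hp1 A]

lemma formula_even (n m : ℕ) (p : ℝ) (hp0 : 0 ≤ p) (hp1 : p ≤ 1) (A : Finset (Fin n)) :
    formulaM n m p {Q : Fin m → (Fin n → Bool) × Bool |
        ∀ j, Even (∑ i ∈ A, if (Q j).1 i then 1 else 0)}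
      = ENNReal.ofReal (1/2 + 1/2 * (1 - 2 * p) ^ A.card) ^ m := by
  have hset : {Q : Fin m → (Fin n → Bool) × Bool | ∀ j, Even (∑ i ∈ A, if (Q j).1 i then 1 else 0)}
      = Set.univ.pi (fun _ : Fin m =>
          {c : (Fin n → Bool) × Bool | Even (∑ i ∈ A, if c.1 i then 1 else 0)}) := by
    ext Q; simp [Set.mem_pi]
  rw [formulaM, hset, Measure.pi_pi]
  rw [Finset.prod_congr rfl (fun j _ => clause_even n p hp0 hp1 A), Finset.prod_const,
    Finset.card_univ, Fintype.card_fin]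

lemma clause_parity {n : ℕ} (c : (Fin n → Bool) × Bool) (σ τ : Fin n → Bool)
    (hσ : xorSat c σ) (hτ : xorSat c τ) :
    Even (∑ i ∈ Finset.univ.filter (fun i => σ i ≠ τ i), if c.1 i then 1 else 0) := by
  have hEab : Even ((∑ i, if c.1 i && σ i then (1:ℕ) else 0)
      + (∑ i, if c.1 i && τ i then (1:ℕ) else 0)) := by
    rw [xorSat, Nat.odd_iff] at hσ hτ
    rw [Nat.even_iff]
    omega
  rw [← Finset.sum_add_distrib,
    ← Finset.sum_filter_add_sum_filter_not Finset.univ (fun i => σ i ≠ τ i)] at hEab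
  have h1 : ∀ i ∈ Finset.univ.filter (fun i => σ i ≠ τ i),
      ((if c.1 i && σ i then (1:ℕ) else 0) + (if c.1 i && τ i then (1:ℕ) else 0))
      = (if c.1 i then 1 else 0) := by
    intro i hi
    simp only [Finset.mem_filter] at hi
    cases hσi : σ i <;> cases hτi : τ i <;> simp_all
  rw [Finset.sum_congr rfl h1] at hEab
  have h2 : Even (∑ i ∈ Finset.univ.filter (fun i => ¬ σ i ≠ τ i),
      ((if c.1 i && σ i then (1:ℕ) else 0) + (if c.1 i && τ i then (1:ℕ) else 0))) := by
    apply Finset.even_sum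
    intro i hi
    simp only [Finset.mem_filter, not_not] at hi
    rw [hi.2]
    exact Even.add_self _
  exact (Nat.even_add.1 hEab).2 h2

lemma v_bounds (p : ℝ) (hp0 : 0 ≤ p) (hp1 : p ≤ 1) (w : ℕ) :
    0 ≤ 1/2 + 1/2 * (1 - 2*p) ^ w ∧ 1/2 + 1/2 * (1 - 2*p) ^ w ≤ 1 := by
  have habs : |1 - 2*p| ≤ 1 := abs_le.2 ⟨by linarith, by linarith⟩
  have h : |(1 - 2*p) ^ w| ≤ 1 := by
    rw [abs_pow]; exact pow_le_one₀ (abs_nonneg _) habs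
  have h2 := abs_le.1 h
  constructor <;> [linarith [h2.1]; linarith [h2.2]]

/-- If the expected pair-count sum tends to `0`, then w.h.p. every pair of distinct
solutions of the random XOR-formula has Hamming distance greater than `g(n)`. -/
theorem whp_separated_of_sum_tendsto_zero (s : ℝ) (hs : 0 < s) (f g : ℕ → ℝ)
    (hf0 : ∀ n, 0 ≤ f n) (hg0 : ∀ n, 0 ≤ g n)
    (hf1 : ∀ᶠ n in atTop, f n ≤ 1)
    (hsum : Tendsto (fun n : ℕ =>
      ∑ w ∈ Finset.Icc 1 ⌊g n⌋₊,
        (n.choose w : ℝ) * (1/2 + 1/2 * (1 - 2 * f n) ^ w) ^ (s * (n:ℝ)))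
      atTop (nhds 0)) :
    Tendsto (fun n : ℕ =>
      formulaM n ⌈s * (n:ℝ)⌉₊ (f n)
        {Q | ∀ σ τ : Fin n → Bool, (∀ j, xorSat (Q j) σ) → (∀ j, xorSat (Q j) τ) →
          σ ≠ τ → g n < (hammingDist σ τ : ℝ)})
      atTop (nhds 1) := by
  have hprob : ∀ n m p, IsProbabilityMeasure (formulaM n m p) := by
    intro n m p; unfold formulaM; infer_instance
  set G : (n : ℕ) → Set (Fin ⌈s * (n:ℝ)⌉₊ → (Fin n → Bool) × Bool) := fun n =>
    {Q | ∀ σ τ : Fin n → Bool, (∀ j, xorSat (Q j) σ) → (∀ j, xorSat (Q j) τ) →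
          σ ≠ τ → g n < (hammingDist σ τ : ℝ)} with hG
  -- the bad-event bound
  have hbad : ∀ᶠ n in atTop, formulaM n ⌈s * (n:ℝ)⌉₊ (f n) (G n)ᶜ ≤
      ENNReal.ofReal (∑ w ∈ Finset.Icc 1 ⌊g n⌋₊,
        (n.choose w : ℝ) * (1/2 + 1/2 * (1 - 2 * f n) ^ w) ^ (s * (n:ℝ))) := by
    filter_upwards [hf1, eventually_ge_atTop 1] with n hfn hn1
    set m := ⌈s * (n:ℝ)⌉₊ with hm
    have hm1 : 1 ≤ m := by
      have hpos : (0:ℝ) < s * n := by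
        have : (1:ℝ) ≤ (n:ℝ) := by exact_mod_cast hn1
        nlinarith
      exact Nat.one_le_iff_ne_zero.2 (by
        simp only [hm, ne_eq, Nat.ceil_eq_zero, not_le]; exact hpos)
    set E : Finset (Fin n) → Set (Fin m → (Fin n → Bool) × Bool) := fun A =>
      {Q | ∀ j, Even (∑ i ∈ A, if (Q j).1 i then 1 else 0)} with hE
    -- inclusion in the union of parity events
    have hincl : (G n)ᶜ ⊆ ⋃ w ∈ Finset.Icc 1 ⌊g n⌋₊,
        ⋃ A ∈ Finset.powersetCard w (Finset.univ : Finset (Fin n)), E A := by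
      intro Q hQ
      simp only [hG, Set.mem_compl_iff, Set.mem_setOf_eq, not_forall] at hQ
      obtain ⟨σ, τ, hσ, hτ, hne, hdist⟩ := hQ
      push_neg at hdist
      set A : Finset (Fin n) := Finset.univ.filter (fun i => σ i ≠ τ i) with hA
      have hcard : A.card = hammingDist σ τ := rfl
      have hcard1 : 1 ≤ A.card := by
        rw [hcard]
        rcases Nat.eq_zero_or_pos (hammingDist σ τ) with h | h
        · exact absurd (hammingDist_eq_zero.1 h) hne
        · exact h
      have hcardG : A.card ≤ ⌊g n⌋₊ := by
        rw [hcard]; exact Nat.le_floor hdist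
      refine Set.mem_biUnion (Finset.mem_Icc.2 ⟨hcard1, hcardG⟩) ?_
      refine Set.mem_biUnion (Finset.mem_powersetCard.2 ⟨Finset.subset_univ A, rfl⟩) ?_
      intro j
      exact clause_parity (Q j) σ τ (hσ j) (hτ j)
    -- union bound
    refine le_trans (measure_mono hincl) ?_
    refine le_trans (measure_biUnion_finset_le _ _) ?_
    refine le_trans (Finset.sum_le_sum fun w _ => measure_biUnion_finset_le _ _) ?_
    rw [ENNReal.ofReal_sum_of_nonneg (fun w _ => by
      have hv := v_bounds (f n) (hf0 n) hfn w
      have : (0:ℝ) ≤ (1/2 + 1/2 * (1 - 2 * f n) ^ w) ^ (s * (n:ℝ)) :=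
        Real.rpow_nonneg hv.1 _
      positivity)]
    refine Finset.sum_le_sum fun w _ => ?_
    have hv := v_bounds (f n) (hf0 n) hfn w
    have hAeq : ∀ A ∈ Finset.powersetCard w (Finset.univ : Finset (Fin n)),
        formulaM n m (f n) (E A)
          = ENNReal.ofReal (1/2 + 1/2 * (1 - 2 * f n) ^ w) ^ m := by
      intro A hA
      rw [hE]
      rw [formula_even n m (f n) (hf0 n) hfn A, (Finset.mem_powersetCard.1 hA).2]
    rw [Finset.sum_congr rfl hAeq, Finset.sum_const, Finset.card_powersetCard,
      Finset.card_univ, Fintype.card_fin, nsmul_eq_mul]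
    rw [← ENNReal.ofReal_pow hv.1, ← ENNReal.ofReal_natCast,
      ← ENNReal.ofReal_mul (by positivity)]
    apply ENNReal.ofReal_le_ofReal
    apply mul_le_mul_of_nonneg_left _ (Nat.cast_nonneg _)
    rcases eq_or_lt_of_le hv.1 with h0 | h0
    · rw [← h0, zero_pow (by omega : m ≠ 0)]
      exact Real.rpow_nonneg le_rfl _
    · calc (1/2 + 1/2 * (1 - 2 * f n) ^ w) ^ m
          = (1/2 + 1/2 * (1 - 2 * f n) ^ w) ^ ((m:ℕ):ℝ) :=
            (Real.rpow_natCast _ m).symm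
        _ ≤ (1/2 + 1/2 * (1 - 2 * f n) ^ w) ^ (s * (n:ℝ)) :=
            Real.rpow_le_rpow_of_exponent_ge h0 hv.2 (Nat.le_ceil _)
  -- conclude
  have hofReal : Tendsto (fun n : ℕ => ENNReal.ofReal (∑ w ∈ Finset.Icc 1 ⌊g n⌋₊,
      (n.choose w : ℝ) * (1/2 + 1/2 * (1 - 2 * f n) ^ w) ^ (s * (n:ℝ))))
      atTop (nhds 0) := by
    have := ENNReal.tendsto_ofReal hsum
    simpa using this
  have hbad0 : Tendsto (fun n : ℕ => formulaM n ⌈s * (n:ℝ)⌉₊ (f n) (G n)ᶜ)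
      atTop (nhds 0) :=
    tendsto_of_tendsto_of_tendsto_of_le_of_le' tendsto_const_nhds hofReal
      (Eventually.of_forall fun n => zero_le) hbad
  have hco : ∀ n : ℕ, formulaM n ⌈s * (n:ℝ)⌉₊ (f n) (G n)
      = 1 - formulaM n ⌈s * (n:ℝ)⌉₊ (f n) (G n)ᶜ := by
    intro n
    haveI := hprob n ⌈s * (n:ℝ)⌉₊ (f n)
    have h := prob_compl_eq_one_sub (μ := formulaM n ⌈s * (n:ℝ)⌉₊ (f n))
      (s := (G n)ᶜ) (Set.to_countable _).measurableSet
    rw [compl_compl] at h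
    exact h
  have : Tendsto (fun n : ℕ => 1 - formulaM n ⌈s * (n:ℝ)⌉₊ (f n) (G n)ᶜ)
      atTop (nhds 1) := by
    have h := ENNReal.Tendsto.sub (tendsto_const_nhds (x := (1:ENNReal)))
      hbad0 (Or.inl ENNReal.one_ne_top)
    simpa using h
  exact this.congr fun n => (hco n).symm
end
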